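/- The adaptive Lasso thresholding function THR_λ(z) = z · max(0, 1 − |λ/z|^ν) with ν ≥ 1 satisfies the three thresholding conditions: (1) |THR_λ(z)| ≤ c|y| for all z,y with |z−y| ≤ λ, for some constant c; (2) THR_λ(z) = 0 for |z| ≤ λ; (3) |THR_λ(z) − z| ≤ λ for all z ∈ R. -/

import Mathlib

/-- Adaptive Lasso thresholding at level `lam` with exponent `ν`:
`z · max(0, 1 − |λ/z|^ν)`, with value `0` at `z = 0`. -/
noncomputable def adaLassoThr (lam ν z : ℝ) : ℝ :=
  if z = 0 then 0 else z * max 0 (1 - |lam / z| ^ ν)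

private lemma bern {ν x : ℝ} (hν : 1 ≤ ν) (hx0 : 0 ≤ x) : 1 - x ^ ν ≤ ν * (1 - x) := by
  have := one_add_mul_self_le_rpow_one_add (s := x - 1) (by linarith) hν
  simp only [add_sub_cancel] at this
  nlinarith

private lemma pow_le_self {ν x : ℝ} (hν : 1 ≤ ν) (hx0 : 0 ≤ x) (hx1 : x ≤ 1) :
    x ^ ν ≤ x := by
  calc x ^ ν ≤ x ^ (1:ℝ) := Real.rpow_le_rpow_of_exponent_ge' hx0 hx1 (by linarith) hν
  _ = x := Real.rpow_one x

/-- the adaptive Lasso thresholding function (`ν ≥ 1`) satisfies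
the three thresholding conditions. -/
theorem adaLassoThr_is_thresholding (lam ν : ℝ) (hlam : 0 ≤ lam) (hν : 1 ≤ ν) :
    (∃ c : ℝ, 0 < c ∧ ∀ z y : ℝ, |z - y| ≤ lam → |adaLassoThr lam ν z| ≤ c * |y|) ∧
    (∀ z : ℝ, |z| ≤ lam → adaLassoThr lam ν z = 0) ∧
    (∀ z : ℝ, |adaLassoThr lam ν z - z| ≤ lam) := by
  have habs : ∀ z : ℝ, z ≠ 0 → |lam / z| = lam / |z| := fun z hz => by
    rw [abs_div, abs_of_nonneg hlam]
  have hzero : ∀ z : ℝ, |z| ≤ lam → adaLassoThr lam ν z = 0 := by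
    intro z hz
    unfold adaLassoThr
    split_ifs with h
    · rfl
    · have hzpos : 0 < |z| := abs_pos.mpr h
      have hx1 : 1 ≤ |lam / z| := by
        rw [habs z h, le_div_iff₀ hzpos]; linarith
      have : 1 ≤ |lam / z| ^ ν := Real.one_le_rpow hx1 (by linarith)
      have : max 0 (1 - |lam / z| ^ ν) = 0 := max_eq_left (by linarith)
      rw [this, mul_zero]
  refine ⟨⟨ν, by linarith, ?_⟩, hzero, ?_⟩
  · intro z y hzy
    by_cases hz0 : z = 0
    · simp [adaLassoThr, hz0]; positivity
    by_cases hle : |z| ≤ lam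
    · rw [hzero z hle]; simp; positivity
    push_neg at hle
    have hzpos : 0 < |z| := by linarith
    set x := lam / |z| with hx
    have hx0 : 0 ≤ x := div_nonneg hlam hzpos.le
    have hx1 : x ≤ 1 := by rw [hx, div_le_one hzpos]; linarith
    have hkey : 1 - x ^ ν ≤ ν * (1 - x) := bern hν hx0
    have hmax : max 0 (1 - x ^ ν) ≤ ν * (1 - x) := by
      apply max_le _ hkey
      have : x ^ ν ≤ 1 := by
        calc x ^ ν ≤ x := pow_le_self hν hx0 hx1
        _ ≤ 1 := hx1
      nlinarith
    have hy : |z| - lam ≤ |y| := by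
      have := abs_sub_abs_le_abs_sub z y
      linarith
    have : |adaLassoThr lam ν z| = |z| * max 0 (1 - x ^ ν) := by
      rw [adaLassoThr, if_neg hz0, abs_mul, habs z hz0, ← hx,
        abs_of_nonneg (le_max_left 0 (1 - x ^ ν))]
    rw [this]
    calc |z| * max 0 (1 - x ^ ν) ≤ |z| * (ν * (1 - x)) :=
          mul_le_mul_of_nonneg_left hmax hzpos.le
      _ = ν * (|z| - lam) := by have h1 : |z| * x = lam := (by rw [hx]; field_simp); rw [← h1]; ring
      _ ≤ ν * |y| := by nlinarith
  · intro z
    by_cases hz0 : z = 0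
    · simp [adaLassoThr, hz0, hlam]
    by_cases hle : |z| ≤ lam
    · rw [hzero z hle]; simpa using hle
    push_neg at hle
    have hzpos : 0 < |z| := by linarith
    set x := lam / |z| with hx
    have hx0 : 0 ≤ x := div_nonneg hlam hzpos.le
    have hx1 : x ≤ 1 := by rw [hx, div_le_one hzpos]; linarith
    have hxp1 : x ^ ν ≤ 1 := le_trans (pow_le_self hν hx0 hx1) hx1
    have hxp0 : 0 ≤ x ^ ν := Real.rpow_nonneg hx0 ν
    have hmax : max 0 (1 - x ^ ν) = 1 - x ^ ν := max_eq_right (by linarith)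
    have : adaLassoThr lam ν z - z = -(z * x ^ ν) := by
      rw [adaLassoThr, if_neg hz0, habs z hz0, ← hx, hmax]; ring
    rw [this, abs_neg, abs_mul, abs_of_nonneg hxp0]
    calc |z| * x ^ ν ≤ |z| * x := mul_le_mul_of_nonneg_left (pow_le_self hν hx0 hx1) hzpos.le
      _ = lam := by rw [hx]; field_simp
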